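/- For every polynomial F ∈ ℂ[z_1,…,z_N] that is symmetric under all permutations of the variables z_2,…,z_N, the following identity holds in K: Y_1^∘ F = x_{12}∘x_{13}∘⋯∘x_{1N} F = A_1·F + Σ_{j=2}^{N} A_j · ((t−1)·z_j/(t·z_j − z_1)) · (s_{1j} F), where A_j := ∏_{k≠j} a_{jk}. -/

import Mathlib

open scoped BigOperators

set_option synthInstance.maxHeartbeats 1000000
set_option maxHeartbeats 2000000

noncomputable section

namespace Stmt6

open MvPolynomial

/-- The polynomial ring `ℂ[z₀, z₁, z₂, …]`; only the variables `z_1, …, z_N` are used. -/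
abbrev R : Type := MvPolynomial ℕ ℂ

/-- The field `K` of rational functions in the variables. -/
abbrev K : Type := FractionRing R

/-- The variable `z_i` as an element of `K`. -/
def Z (i : ℕ) : K := algebraMap R K (X i)

/-- A complex constant as an element of `K`. -/
def cc (c : ℂ) : K := algebraMap R K (C c)

/-- Lift an injective ring endomorphism of `R` to `K`. -/
def liftRingHom (f : R →+* R) (hf : Function.Injective f) : K →+* K :=
  IsFractionRing.lift (g := (algebraMap R K).comp f)
    (by
      rw [RingHom.coe_comp]
      exact (IsFractionRing.injective R K).comp hf)

/-- The automorphism `s_{ij}` of `K` interchanging `z_i` and `z_j` (and fixing the other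
variables). -/
def swapK (i j : ℕ) : K →+* K :=
  liftRingHom (rename (Equiv.swap i j)).toRingHom
    (rename_injective _ (Equiv.swap i j).injective)

/-- The algebra endomorphism of `R` with `z_i ↦ c·z_i`, fixing the other variables. -/
def scaleHom (c : ℂ) (i : ℕ) : R →ₐ[ℂ] R :=
  aeval fun k => if k = i then C c * X k else X k

lemma scaleHom_comp (c : ℂ) (hc : c ≠ 0) (i : ℕ) :
    (scaleHom c⁻¹ i).comp (scaleHom c i) = AlgHom.id ℂ R := by
  apply algHom_ext
  intro k
  by_cases h : k = i
  · subst h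
    simp only [scaleHom, AlgHom.coe_comp, Function.comp_apply, aeval_X, if_pos, map_mul,
      aeval_C, AlgHom.coe_id, id_eq, algebraMap_eq]
    rw [← mul_assoc, ← C_mul, mul_inv_cancel₀ hc, C_1, one_mul]
  · simp [scaleHom, h]

lemma scaleHom_injective (c : ℂ) (hc : c ≠ 0) (i : ℕ) :
    Function.Injective (scaleHom c i) := by
  intro p p' hpp'
  have h1 := DFunLike.congr_fun (scaleHom_comp c hc i) p
  have h2 := DFunLike.congr_fun (scaleHom_comp c hc i) p'
  simp only [AlgHom.coe_comp, Function.comp_apply, AlgHom.coe_id, id_eq] at h1 h2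
  rw [← h1, ← h2, hpp']

/-- The automorphism `ĉ_i : z_i ↦ c·z_i` of `K` (defined as the identity when `c = 0`). -/
def scaleK (c : ℂ) (i : ℕ) : K →+* K :=
  if hc : c = 0 then RingHom.id K
  else liftRingHom (scaleHom c i).toRingHom (scaleHom_injective c hc i)

/-- `a_{ij} = v⁻¹·(t·z_i − z_j)/(z_i − z_j)` where `t = v²`. -/
def aa (v : ℂ) (i j : ℕ) : K := cc v⁻¹ * (cc (v ^ 2) * Z i - Z j) / (Z i - Z j)

/-- `b_{ij} = −v⁻¹·(t − 1)·z_j/(z_i − z_j)` where `t = v²`. -/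
def bb (v : ℂ) (i j : ℕ) : K := -(cc v⁻¹ * (cc (v ^ 2) - 1) * Z j) / (Z i - Z j)

/-- The operator `x_{ij}` (for `i < j`: `a_{ij} + b_{ij}·s_{ij}`; for `i > j`:
`a_{ij} − b_{ji}·s_{ij}`). -/
def xop (v : ℂ) (i j : ℕ) : K → K := fun p =>
  if i < j then aa v i j * p + bb v i j * swapK i j p
  else aa v i j * p - bb v j i * swapK i j p

/-- Composition of a list of operators (the head of the list acts last). -/
def compList {α : Type*} (l : List (α → α)) : α → α := l.foldr (· ∘ ·) id

/-- The q-deformed Dunkl–Cherednik operator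
`Y_i = x_{i,i+1}∘⋯∘x_{i,N}∘ q̂_i ∘ x_{i,1}∘⋯∘x_{i,i−1}` in the variables `z_1, …, z_N`,
with parameters `v` (so `t = v²`) and `q`. -/
def Yop (v q : ℂ) (N i : ℕ) : K → K :=
  compList ((List.range' (i + 1) (N - i)).map fun j => xop v i j) ∘
    ⇑(scaleK q i) ∘
      compList ((List.range' 1 (i - 1)).map fun j => xop v i j)

lemma amap_inj : Function.Injective (algebraMap R K) := IsFractionRing.injective R K

lemma Z_sub_ne (i j : ℕ) (h : i ≠ j) : Z i - Z j ≠ 0 := by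
  rw [Z, Z, ← map_sub, (map_ne_zero_iff _ amap_inj)]
  intro hc
  have := congrArg (coeff (Finsupp.single i 1)) hc
  classical
  rw [coeff_sub, coeff_X, coeff_X', if_neg (show ¬ Finsupp.single j 1 = Finsupp.single i 1 by
    simp [Finsupp.single_eq_single_iff, h, Ne.symm h]), coeff_zero] at this
  norm_num at this

lemma ccZ_sub_ne (c : ℂ) (i j : ℕ) (h : i ≠ j) : cc c * Z j - Z i ≠ 0 := by
  rw [Z, Z, cc, ← map_mul, ← map_sub, (map_ne_zero_iff _ amap_inj)]
  intro hc
  have := congrArg (coeff (Finsupp.single i 1)) hc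
  classical
  rw [coeff_sub, coeff_C_mul, coeff_X, coeff_X', if_neg, coeff_zero] at this
  · norm_num at this
  · simp [Finsupp.single_eq_single_iff, h, Ne.symm h]

lemma swapK_amap (i j : ℕ) (p : R) :
    swapK i j (algebraMap R K p) = algebraMap R K (rename (Equiv.swap i j) p) := by
  rw [swapK, liftRingHom]
  exact IsFractionRing.lift_algebraMap _ p

lemma swapK_Z (i j k : ℕ) : swapK i j (Z k) = Z (Equiv.swap i j k) := by
  rw [Z, swapK_amap, rename_X]; rfl

lemma swapK_cc (i j : ℕ) (c : ℂ) : swapK i j (cc c) = cc c := by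
  rw [cc, swapK_amap, rename_C]

lemma swapK_aa (p q : ℕ) (v : ℂ) (i j : ℕ) :
    swapK p q (aa v i j) = aa v (Equiv.swap p q i) (Equiv.swap p q j) := by
  simp only [aa, map_div₀, map_sub, map_mul, swapK_cc, swapK_Z]

lemma swapK_bb (p q : ℕ) (v : ℂ) (i j : ℕ) :
    swapK p q (bb v i j) = bb v (Equiv.swap p q i) (Equiv.swap p q j) := by
  simp only [bb, map_div₀, map_sub, map_mul, map_neg, map_one, swapK_cc, swapK_Z]

lemma key_id (v : ℂ) (i m j : ℕ) (him : i ≠ m) (hij : i ≠ j) (hmj : m ≠ j) :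
    bb v i j * aa v j m = aa v i m * bb v i j + bb v i m * bb v m j := by
  have h1 := Z_sub_ne i j hij
  have h2 := Z_sub_ne j m (Ne.symm hmj)
  have h3 := Z_sub_ne i m him
  have h4 := Z_sub_ne m j hmj
  rw [aa, aa, bb, bb, bb]
  field_simp
  ring

lemma aux_aa_bb (v : ℂ) (j : ℕ) (hj : j ≠ 1) :
    aa v j 1 * ((cc (v ^ 2) - 1) * Z j / (cc (v ^ 2) * Z j - Z 1)) = bb v 1 j := by
  have h1 := Z_sub_ne j 1 hj
  have h2 := Z_sub_ne 1 j (Ne.symm hj)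
  have h3 := ccZ_sub_ne (v ^ 2) 1 j (Ne.symm hj)
  rw [aa, bb]
  field_simp
  ring

lemma swap_comp (a b c : ℕ) (hab : a ≠ b) (hac : a ≠ c) (hbc : b ≠ c) :
    ⇑(Equiv.swap a b) ∘ ⇑(Equiv.swap a c) = ⇑(Equiv.swap a c) ∘ ⇑(Equiv.swap c b) := by
  funext x
  simp only [Function.comp_apply, Equiv.swap_apply_def]
  split_ifs <;> omega

lemma main_ind (N : ℕ) (v : ℂ) (F : R)
    (hsym : ∀ i j : ℕ, 2 ≤ i → i ≤ N → 2 ≤ j → j ≤ N → rename (Equiv.swap i j) F = F)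
    (n : ℕ) :
    ∀ m : ℕ, 2 ≤ m → m + n = N + 1 →
    compList ((List.range' m n).map fun j => xop v 1 j) (algebraMap R K F)
      = (∏ k ∈ Finset.Icc m N, aa v 1 k) * algebraMap R K F
        + ∑ j ∈ Finset.Icc m N,
            (bb v 1 j * ∏ k ∈ (Finset.Icc m N).erase j, aa v j k) *
              swapK 1 j (algebraMap R K F) := by
  induction n with
  | zero =>
    intro m hm hmn
    have he : Finset.Icc m N = ∅ := Finset.Icc_eq_empty (by omega)
    simp [compList, he]
  | succ n ih =>
    intro m hm hmn
    have hmN : m ≤ N := by omega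
    have hmem : m ∉ Finset.Icc (m + 1) N := by simp
    have hIcc : Finset.Icc m N = insert m (Finset.Icc (m + 1) N) := by
      ext x; simp only [Finset.mem_insert, Finset.mem_Icc]; omega
    rw [List.range'_succ]
    have hstep : compList ((m :: List.range' (m + 1) n).map fun j => xop v 1 j)
          (algebraMap R K F)
        = xop v 1 m (compList ((List.range' (m + 1) n).map fun j => xop v 1 j)
          (algebraMap R K F)) := rfl
    rw [hstep, ih (m + 1) (by omega) (by omega)]
    simp only [xop]
    rw [if_pos (show (1:ℕ) < m by omega)]
    have hswap : swapK 1 m ((∏ k ∈ Finset.Icc (m + 1) N, aa v 1 k) * algebraMap R K F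
          + ∑ j ∈ Finset.Icc (m + 1) N,
              (bb v 1 j * ∏ k ∈ (Finset.Icc (m + 1) N).erase j, aa v j k) *
                swapK 1 j (algebraMap R K F))
        = (∏ k ∈ Finset.Icc (m + 1) N, aa v m k) * swapK 1 m (algebraMap R K F)
          + ∑ j ∈ Finset.Icc (m + 1) N,
              (bb v m j * ∏ k ∈ (Finset.Icc (m + 1) N).erase j, aa v j k) *
                swapK 1 j (algebraMap R K F) := by
      rw [map_add, map_mul, map_sum]
      congr 1
      · congr 1
        rw [map_prod]
        refine Finset.prod_congr rfl fun k hk => ?_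
        have hk' := Finset.mem_Icc.mp hk
        rw [swapK_aa, Equiv.swap_apply_left,
          Equiv.swap_apply_of_ne_of_ne (by omega) (by omega)]
      · refine Finset.sum_congr rfl fun j hj => ?_
        have hj' := Finset.mem_Icc.mp hj
        rw [map_mul, map_mul, swapK_bb, Equiv.swap_apply_left,
          Equiv.swap_apply_of_ne_of_ne (by omega) (by omega), map_prod]
        congr 1
        · congr 1
          refine Finset.prod_congr rfl fun k hk => ?_
          have hk' := Finset.mem_Icc.mp (Finset.mem_of_mem_erase hk)
          rw [swapK_aa, Equiv.swap_apply_of_ne_of_ne (by omega) (by omega),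
            Equiv.swap_apply_of_ne_of_ne (by omega) (by omega)]
        · rw [swapK_amap 1 j, swapK_amap 1 m, rename_rename,
            swap_comp 1 m j (by omega) (by omega) (by omega), ← rename_rename,
            hsym j m (by omega) (by omega) hm hmN]
    rw [hswap, hIcc, Finset.prod_insert hmem, Finset.sum_insert hmem,
      Finset.erase_insert hmem]
    have htar : ∑ j ∈ Finset.Icc (m + 1) N,
          (bb v 1 j * ∏ k ∈ (insert m (Finset.Icc (m + 1) N)).erase j, aa v j k) *
            swapK 1 j (algebraMap R K F)
        = ∑ j ∈ Finset.Icc (m + 1) N,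
          (bb v 1 j * (aa v j m * ∏ k ∈ (Finset.Icc (m + 1) N).erase j, aa v j k)) *
            swapK 1 j (algebraMap R K F) := by
      refine Finset.sum_congr rfl fun j hj => ?_
      have hj' := Finset.mem_Icc.mp hj
      rw [Finset.erase_insert_of_ne (by omega : m ≠ j),
        Finset.prod_insert (fun h => hmem (Finset.mem_of_mem_erase h))]
    rw [htar]
    have hsum : aa v 1 m * (∑ j ∈ Finset.Icc (m + 1) N,
          (bb v 1 j * ∏ k ∈ (Finset.Icc (m + 1) N).erase j, aa v j k) *
            swapK 1 j (algebraMap R K F))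
        + bb v 1 m * (∑ j ∈ Finset.Icc (m + 1) N,
          (bb v m j * ∏ k ∈ (Finset.Icc (m + 1) N).erase j, aa v j k) *
            swapK 1 j (algebraMap R K F))
        = ∑ j ∈ Finset.Icc (m + 1) N,
          (bb v 1 j * (aa v j m * ∏ k ∈ (Finset.Icc (m + 1) N).erase j, aa v j k)) *
            swapK 1 j (algebraMap R K F) := by
      rw [Finset.mul_sum, Finset.mul_sum, ← Finset.sum_add_distrib]
      refine Finset.sum_congr rfl fun j hj => ?_
      have hj' := Finset.mem_Icc.mp hj
      have hk := key_id v 1 m j (by omega) (by omega) (by omega)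
      linear_combination (-((∏ k ∈ (Finset.Icc (m + 1) N).erase j, aa v j k) *
        swapK 1 j (algebraMap R K F))) * hk
    linear_combination hsum


/-- On polynomials symmetric in `z_2, …, z_N`, the classical Dunkl–Cherednik
operator `Y_1^∘ = x_{12}∘⋯∘x_{1N}` simplifies to
`A_1 + Σ_{j=2}^N A_j·((t−1)z_j/(t·z_j − z_1))·s_{1j}`, where `A_j = ∏_{k ≠ j} a_{jk}`. -/
theorem Y1_classical_simplification (N : ℕ) (v : ℂ) (hv : v ≠ 0) (F : R)
    (hvars : ∀ k ∈ F.vars, 1 ≤ k ∧ k ≤ N)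
    (hsym : ∀ i j : ℕ, 2 ≤ i → i ≤ N → 2 ≤ j → j ≤ N → rename (Equiv.swap i j) F = F) :
    compList ((List.range' 2 (N - 1)).map fun j => xop v 1 j) (algebraMap R K F)
      = (∏ k ∈ (Finset.Icc 1 N).erase 1, aa v 1 k) * algebraMap R K F
        + ∑ j ∈ Finset.Icc 2 N,
            (∏ k ∈ (Finset.Icc 1 N).erase j, aa v j k) *
              ((cc (v ^ 2) - 1) * Z j / (cc (v ^ 2) * Z j - Z 1)) *
                swapK 1 j (algebraMap R K F) := by
  rcases Nat.eq_zero_or_pos N with hN | hN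
  · subst hN
    have h0 : Finset.Icc 1 0 = (∅ : Finset ℕ) := Finset.Icc_eq_empty (by omega)
    have h1 : Finset.Icc 2 0 = (∅ : Finset ℕ) := Finset.Icc_eq_empty (by omega)
    simp [compList, h0, h1]
  · rw [main_ind N v F hsym (N - 1) 2 le_rfl (by omega)]
    congr 1
    · have hset1 : (Finset.Icc 1 N).erase 1 = Finset.Icc 2 N := by
        ext x; simp only [Finset.mem_erase, Finset.mem_Icc]; omega
      rw [hset1]
    · refine Finset.sum_congr rfl fun j hj => ?_
      have hj' := Finset.mem_Icc.mp hj
      have hset2 : (Finset.Icc 1 N).erase j = insert 1 ((Finset.Icc 2 N).erase j) := by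
        ext x; simp only [Finset.mem_erase, Finset.mem_insert, Finset.mem_Icc]; omega
      rw [hset2, Finset.prod_insert (by simp [Finset.mem_erase, Finset.mem_Icc])]
      have haux := aux_aa_bb v j (by omega)
      linear_combination (-((∏ k ∈ (Finset.Icc 2 N).erase j, aa v j k) *
        swapK 1 j (algebraMap R K F))) * haux

end Stmt6
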